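/- A cancellative monoid H is a BF-monoid (i.e., L(a) is finite and nonempty for all a ∈ H) if and only if there exists a right length function on H, that is, a function λ : H → ℕ with λ(a) < λ(b) for all a ∈ H and all b ∈ aH \ aH^×. -/

import Mathlib

open scoped Classical ENNReal

/-- The set of lengths of `a`: all `k` such that `a` is a product of `k` irreducibles,
with the convention `L(a) = {0}` for units. -/
noncomputable def lengths {M : Type*} [Monoid M] (a : M) : Set ℕ :=
  if IsUnit a then {0}
  else {k | ∃ l : List M, l.length = k ∧ (∀ x ∈ l, Irreducible x) ∧ l.prod = a}

/-- A monoid is atomic if every nonunit is a finite product of irreducibles (atoms). -/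
def Atomic (M : Type*) [Monoid M] : Prop :=
  ∀ a : M, ¬IsUnit a → ∃ l : List M, (∀ x ∈ l, Irreducible x) ∧ l.prod = a

/-- The set of distances of a set `L ⊆ ℕ`. -/
def distances (L : Set ℕ) : Set ℕ :=
  {d | 0 < d ∧ ∃ k ∈ L, k + d ∈ L ∧ ∀ m ∈ L, k ≤ m → m ≤ k + d → m = k ∨ m = k + d}

/-- The set of distances `Δ(H)` of a monoid. -/
def DeltaH (M : Type*) [Monoid M] : Set ℕ :=
  ⋃ a : M, distances (lengths a)

/-- The union `U_k(H)` of all sets of lengths containing `k`. -/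
def lengthUnion (M : Type*) [Monoid M] (k : ℕ) : Set ℕ :=
  {ℓ | ∃ l1 l2 : List M, l1.length = k ∧ l2.length = ℓ ∧
      (∀ x ∈ l1, Irreducible x) ∧ (∀ x ∈ l2, Irreducible x) ∧ l1.prod = l2.prod}

/-- The `k`-th elasticity `ρ_k(H) = sup U_k(H)`, valued in `ℝ≥0∞`. -/
noncomputable def rhoK (M : Type*) [Monoid M] (k : ℕ) : ℝ≥0∞ :=
  ⨆ ℓ ∈ lengthUnion M k, (ℓ : ℝ≥0∞)

/-- `λ_k(H) = min U_k(H)`. -/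
noncomputable def lamK (M : Type*) [Monoid M] (k : ℕ) : ℕ :=
  sInf (lengthUnion M k)

/-- The elasticity `ρ(L) = sup L / min L` of a set of lengths, with `ρ({0}) = 1`. -/
noncomputable def setElasticity (L : Set ℕ) : ℝ≥0∞ :=
  if L = {0} then 1 else (⨆ n ∈ L, (n : ℝ≥0∞)) / ((sInf L : ℕ) : ℝ≥0∞)

/-- The elasticity `ρ(H) = sup { ρ(L(a)) : a ∈ H }`. -/
noncomputable def elasticity (M : Type*) [Monoid M] : ℝ≥0∞ :=
  ⨆ a : M, setElasticity (lengths a)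

/-- The principal left ideal `Ha`. -/
def leftIdeal {M : Type*} [Monoid M] (a : M) : Set M := Set.range (· * a)

/-- The principal right ideal `aH`. -/
def rightIdeal {M : Type*} [Monoid M] (a : M) : Set M := Set.range (a * ·)

/-- `A` is a generating set of the monoid `M`. -/
def Generates {M : Type*} [Monoid M] (A : Set M) : Prop :=
  ∀ a : M, ∃ l : List M, (∀ x ∈ l, x ∈ A) ∧ l.prod = a

section Aux

variable {M : Type*} [CancelMonoid M]

lemma aux_units_of_mul_eq_one {x y : M} (h : x * y = 1) : IsUnit x ∧ IsUnit y := by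
  have h2 : y * x = 1 := by
    have : x * (y * x) = x * 1 := by rw [← mul_assoc, h, one_mul, mul_one]
    exact mul_left_cancel this
  exact ⟨⟨⟨x, y, h, h2⟩, rfl⟩, ⟨⟨y, x, h2, h⟩, rfl⟩⟩

lemma aux_isUnit_of_mul {x y : M} (h : IsUnit (x * y)) : IsUnit x ∧ IsUnit y := by
  obtain ⟨u, hu⟩ := h
  have h1 : x * (y * ↑u⁻¹) = 1 := by rw [← mul_assoc, ← hu]; exact u.mul_inv
  have h2 : (↑u⁻¹ * x) * y = 1 := by rw [mul_assoc, ← hu]; exact u.inv_mul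
  exact ⟨(aux_units_of_mul_eq_one h1).1, (aux_units_of_mul_eq_one h2).2⟩

lemma aux_prod_not_unit {l : List M} (hl : ∀ x ∈ l, Irreducible x) (hne : l ≠ []) :
    ¬IsUnit l.prod := by
  cases l with
  | nil => exact absurd rfl hne
  | cons x t =>
    rw [List.prod_cons]
    intro hu
    exact (hl x List.mem_cons_self).not_isUnit (aux_isUnit_of_mul hu).1

lemma aux_lengths_mem {a : M} (ha : ¬IsUnit a) {k : ℕ} (hk : k ∈ lengths a) :
    ∃ l : List M, l.length = k ∧ (∀ x ∈ l, Irreducible x) ∧ l.prod = a := by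
  simpa [lengths, if_neg ha] using hk

lemma aux_mem_lengths {a : M} (ha : ¬IsUnit a) {l : List M}
    (hl : ∀ x ∈ l, Irreducible x) (hp : l.prod = a) : l.length ∈ lengths a := by
  simp only [lengths, if_neg ha, Set.mem_setOf_eq]
  exact ⟨l, rfl, hl, hp⟩

/-- Length of any factorization into nonunits is bounded by `lam` of the product. -/
lemma aux_len_le (lam : M → ℕ) (hlam : ∀ a c : M, ¬IsUnit c → lam a < lam (a * c)) :
    ∀ l : List M, (∀ x ∈ l, ¬IsUnit x) → l.length ≤ lam l.prod := by
  intro l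
  induction l using List.reverseRecOn with
  | nil => intro _; exact Nat.zero_le _
  | append_singleton t x ih =>
    intro h
    have hx : ¬IsUnit x := h x (by simp)
    have ht : t.length ≤ lam t.prod := ih (fun y hy => h y (by simp [hy]))
    have := hlam t.prod x hx
    simp only [List.prod_append, List.prod_cons, List.prod_nil, mul_one, List.length_append,
      List.length_singleton]
    omega

/-- Atomicity from a right length function. -/
lemma aux_atomic (lam : M → ℕ) (hlam : ∀ a c : M, ¬IsUnit c → lam a < lam (a * c)) :
    ∀ n : ℕ, ∀ a : M, lam a ≤ n → ¬IsUnit a →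
      ∃ l : List M, l ≠ [] ∧ (∀ x ∈ l, Irreducible x) ∧ l.prod = a := by
  intro n
  induction n using Nat.strong_induction_on with
  | _ n ih =>
    intro a han ha
    by_cases hirr : Irreducible a
    · exact ⟨[a], by simp, by simpa using hirr, by simp⟩
    · -- a is a nonunit non-atom: split off an atom on the right
      have hsplit : ∃ v w : M, ¬IsUnit v ∧ ¬IsUnit w ∧ a = v * w := by
        rw [irreducible_iff] at hirr
        push_neg at hirr
        obtain ⟨v, w, hvw, hv, hw⟩ := hirr ha
        exact ⟨v, w, hv, hw, hvw⟩
      set S : Set ℕ := {k | ∃ v w : M, ¬IsUnit v ∧ ¬IsUnit w ∧ a = v * w ∧ lam v = k} with hS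
      have hSne : S.Nonempty := by
        obtain ⟨v, w, hv, hw, hvw⟩ := hsplit
        exact ⟨lam v, v, w, hv, hw, hvw, rfl⟩
      have hSbdd : ∀ k ∈ S, k < lam a := by
        rintro k ⟨v, w, hv, hw, hvw, rfl⟩
        rw [hvw]; exact hlam v w hw
      have hbdd : BddAbove S := ⟨lam a, fun k hk => (hSbdd k hk).le⟩
      obtain ⟨v, w, hv, hw, hvw, hvmax⟩ := Nat.sSup_mem hSne hbdd
      -- w is irreducible by maximality of lam v
      have hwirr : Irreducible w := by
        rw [irreducible_iff]
        refine ⟨hw, fun x y hxy => ?_⟩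
        by_contra hcon
        push_neg at hcon
        obtain ⟨hx, hy⟩ := hcon
        have hvx : ¬IsUnit (v * x) := fun h => hv (aux_isUnit_of_mul h).1
        have hmem : lam (v * x) ∈ S :=
          ⟨v * x, y, hvx, hy, by rw [hvw, hxy, mul_assoc], rfl⟩
        have h1 : lam (v * x) ≤ sSup S := le_csSup hbdd hmem
        have h2 : lam v < lam (v * x) := hlam v x hx
        omega
      -- recurse on v
      have hvlt : lam v < lam a := by rw [hvw]; exact hlam v w hw
      have hvlt' : lam v < n := lt_of_lt_of_le hvlt han
      obtain ⟨lv, _, hlv, hlvp⟩ := ih (lam v) hvlt' v le_rfl hv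
      refine ⟨lv ++ [w], by simp, ?_, by simp [hlvp, hvw]⟩
      intro x hx
      rcases List.mem_append.1 hx with h | h
      · exact hlv x h
      · simp at h; subst h; exact hwirr

end Aux

theorem stmt2 {M : Type*} [CancelMonoid M] :
    (∀ a : M, (lengths a).Finite ∧ (lengths a).Nonempty) ↔
      ∃ lam : M → ℕ, ∀ a b : M, b ∈ rightIdeal a →
        (∀ u : M, IsUnit u → b ≠ a * u) → lam a < lam b := by
  constructor
  · -- BF ⟹ right length function: take lam a = max L(a)
    intro h
    refine ⟨fun a => sSup (lengths a), ?_⟩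
    intro a b hb hne
    show sSup (lengths a) < sSup (lengths b)
    obtain ⟨c, hc⟩ := hb
    have hc' : b = a * c := hc.symm
    have hcu : ¬IsUnit c := fun hu => hne c hu hc'
    -- b is not a unit
    have hbu : ¬IsUnit b := by
      rw [hc']; intro hu; exact hcu (aux_isUnit_of_mul hu).2
    -- factorization of c
    obtain ⟨k0, hk0⟩ := (h c).2
    obtain ⟨lm, hlmlen, hlmirr, hlmprod⟩ := aux_lengths_mem hcu hk0
    have hlmne : lm ≠ [] := by
      rintro rfl
      exact hcu (by rw [← hlmprod]; exact isUnit_one)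
    have hlmpos : 1 ≤ lm.length := List.length_pos_iff.2 hlmne
    by_cases ha : IsUnit a
    · -- lam a = 0, lam b ≥ 1
      have h0 : lengths a = {0} := by simp [lengths, ha]
      rw [h0, csSup_singleton]
      obtain ⟨k1, hk1⟩ := (h b).2
      obtain ⟨lb, hlblen, hlbirr, hlbprod⟩ := aux_lengths_mem hbu hk1
      have hlbne : lb ≠ [] := by
        rintro rfl
        exact hbu (by rw [← hlbprod]; exact isUnit_one)
      have hmem : lb.length ∈ lengths b := aux_mem_lengths hbu hlbirr hlbprod
      have h1 := le_csSup (h b).1.bddAbove hmem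
      have h2 : 1 ≤ lb.length := List.length_pos_iff.2 hlbne
      omega
    · -- take a maximal factorization of a, append that of c
      have hane : (lengths a).Nonempty := (h a).2
      have hamem : sSup (lengths a) ∈ lengths a :=
        Nat.sSup_mem hane (h a).1.bddAbove
      obtain ⟨la, halen, hairr, haprod⟩ := aux_lengths_mem ha hamem
      have hmem : (la ++ lm).length ∈ lengths b := by
        refine aux_mem_lengths hbu ?_ ?_
        · intro x hx
          rcases List.mem_append.1 hx with h' | h'
          · exact hairr x h'
          · exact hlmirr x h'
        · rw [List.prod_append, haprod, hlmprod, hc']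
      have := le_csSup (h b).1.bddAbove hmem
      simp only [List.length_append, halen] at this
      omega
  · -- right length function ⟹ BF
    rintro ⟨lam, hlam⟩ a
    have hlam' : ∀ a c : M, ¬IsUnit c → lam a < lam (a * c) := by
      intro a c hc
      refine hlam a (a * c) ⟨c, rfl⟩ ?_
      intro u hu heq
      exact hc (by rwa [mul_left_cancel heq] )
    constructor
    · -- finiteness
      by_cases ha : IsUnit a
      · simp [lengths, ha]
      · refine Set.Finite.subset (Set.finite_Iic (lam a)) ?_
        intro k hk
        simp only [lengths, if_neg ha, Set.mem_setOf_eq] at hk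
        obtain ⟨l, hlen, hirr, hprod⟩ := hk
        have := aux_len_le lam hlam' l (fun x hx => (hirr x hx).not_isUnit)
        rw [hprod, hlen] at this
        exact this
    · -- nonemptiness
      by_cases ha : IsUnit a
      · simp [lengths, ha]
      · obtain ⟨l, _, hlirr, hlprod⟩ := aux_atomic lam hlam' (lam a) a le_rfl ha
        exact ⟨l.length, aux_mem_lengths ha hlirr hlprod⟩
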